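/- The f-vector of the complex of non-chromatic scales is (1, 12, 66, 208, 399, 456, 282, 72, 3): the number of non-chromatic scales with exactly k elements is 1 for k = 0, 12 for k = 1, 66 for k = 2, 208 for k = 3, 399 for k = 4, 456 for k = 5, 282 for k = 6, 72 for k = 7, 3 for k = 8, and 0 for k ≥ 9. -/

import Mathlib

set_option maxRecDepth 10000
set_option maxHeartbeats 10000000


/-- A scale is a finite subset of the twelve pitch classes `ZMod 12`.
It is non-chromatic if it contains no three consecutive pitch classes. -/
def NonChromatic (S : Finset (ZMod 12)) : Prop :=
  ∀ t : ZMod 12, ¬(t ∈ S ∧ t + 1 ∈ S ∧ t + 2 ∈ S)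

instance : DecidablePred NonChromatic := fun S => by
  unfold NonChromatic; infer_instance

/-- A non-chromatic scale is maximal if every scale strictly containing it
fails to be non-chromatic. -/
def MaximalNC (S : Finset (ZMod 12)) : Prop :=
  NonChromatic S ∧ ∀ T : Finset (ZMod 12), S ⊂ T → ¬ NonChromatic T

instance : DecidablePred MaximalNC := fun S => by
  unfold MaximalNC; infer_instance

/-- The translateScale `t + S` of a scale. -/
def translateScale (t : ZMod 12) (S : Finset (ZMod 12)) : Finset (ZMod 12) :=
  S.image (fun x => t + x)

lemma triple_le_two (S : Finset (ZMod 12)) (h : NonChromatic S) (t : ZMod 12) :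
    (S ∩ {t, t + 1, t + 2}).card ≤ 2 := by
  by_contra hlt
  push_neg at hlt
  have h3 : ({t, t + 1, t + 2} : Finset (ZMod 12)).card ≤ 3 := by
    have h1 := Finset.card_insert_le t ({t + 1, t + 2} : Finset (ZMod 12))
    have h2 := Finset.card_insert_le (t + 1) ({t + 2} : Finset (ZMod 12))
    simp at h1 h2
    omega
  have heq : S ∩ {t, t + 1, t + 2} = {t, t + 1, t + 2} :=
    Finset.eq_of_subset_of_card_le Finset.inter_subset_right (by omega)
  have mem : ∀ x, x ∈ ({t, t + 1, t + 2} : Finset (ZMod 12)) → x ∈ S := by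
    intro x hx
    have hx2 : x ∈ S ∩ ({t, t + 1, t + 2} : Finset (ZMod 12)) := by rw [heq]; exact hx
    exact (Finset.mem_inter.mp hx2).1
  exact h t ⟨mem t (by simp), mem (t+1) (by simp), mem (t+2) (by simp)⟩

lemma card_le_eight (S : Finset (ZMod 12)) (h : NonChromatic S) : S.card ≤ 8 := by
  have h0 := triple_le_two S h 0
  have h3 := triple_le_two S h 3
  have h6 := triple_le_two S h 6
  have h9 := triple_le_two S h 9
  norm_num at h0 h3 h6 h9
  have hsub : S ⊆ (S ∩ {0,1,2}) ∪ (S ∩ {3,4,5}) ∪ (S ∩ {6,7,8}) ∪ (S ∩ {9,10,11}) := by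
    intro x hx
    have : x ∈ ({0,1,2} : Finset (ZMod 12)) ∪ {3,4,5} ∪ {6,7,8} ∪ {9,10,11} := by
      clear hx; revert x; decide
    simp only [Finset.mem_union, Finset.mem_inter] at this ⊢
    tauto
  have hc := Finset.card_le_card hsub
  have c1 := Finset.card_union_le ((S ∩ {0,1,2}) ∪ (S ∩ {3,4,5}) ∪ (S ∩ {6,7,8})) (S ∩ {9,10,11})
  have c2 := Finset.card_union_le ((S ∩ {0,1,2}) ∪ (S ∩ {3,4,5})) (S ∩ {6,7,8})
  have c3 := Finset.card_union_le (S ∩ {0,1,2}) (S ∩ {3,4,5})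
  omega


theorem f_vector_nonchromatic :
    (Finset.univ.filter (fun S : Finset (ZMod 12) => NonChromatic S ∧ S.card = 0)).card = 1 ∧
    (Finset.univ.filter (fun S : Finset (ZMod 12) => NonChromatic S ∧ S.card = 1)).card = 12 ∧
    (Finset.univ.filter (fun S : Finset (ZMod 12) => NonChromatic S ∧ S.card = 2)).card = 66 ∧
    (Finset.univ.filter (fun S : Finset (ZMod 12) => NonChromatic S ∧ S.card = 3)).card = 208 ∧
    (Finset.univ.filter (fun S : Finset (ZMod 12) => NonChromatic S ∧ S.card = 4)).card = 399 ∧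
    (Finset.univ.filter (fun S : Finset (ZMod 12) => NonChromatic S ∧ S.card = 5)).card = 456 ∧
    (Finset.univ.filter (fun S : Finset (ZMod 12) => NonChromatic S ∧ S.card = 6)).card = 282 ∧
    (Finset.univ.filter (fun S : Finset (ZMod 12) => NonChromatic S ∧ S.card = 7)).card = 72 ∧
    (Finset.univ.filter (fun S : Finset (ZMod 12) => NonChromatic S ∧ S.card = 8)).card = 3 ∧
    (∀ k : ℕ, 9 ≤ k →
      (Finset.univ.filter (fun S : Finset (ZMod 12) => NonChromatic S ∧ S.card = k)).card = 0) := by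
  refine ⟨by decide, by decide, by decide, by decide, by decide, by decide, by decide,
    by decide, by decide, ?_⟩
  intro k hk
  rw [Finset.card_eq_zero, Finset.filter_eq_empty_iff]
  rintro S - ⟨h1, h2⟩
  have := card_le_eight S h1
  omega
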